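/- arXiv:2501.18803 — 4 statements merged into one kernel-verified Lean document; each statement's English description precedes it below -/
import Mathlib

section
/- Suppose x : S × A → ℝ satisfies the flow constraints and x(s,a) ≥ 0 for all (s,a) ∈ S × A. Then the sum of squares of the values of x is bounded as (1 − γ)^{-2}/(|S||A|) ≤ ∑_{s∈S} ∑_{a∈A} x(s,a)² ≤ (1 − γ)^{-2}, where |S| and |A| denote the cardinalities of S and A. -/
/-- **Proposition 1, equation (15).** If `x : S × A → ℝ` satisfies the flow constraints of
the dual LP and is nonnegative, then the sum of squares of its values is bounded below by
`(1 - γ)⁻² / (|S||A|)` and above by `(1 - γ)⁻²`. -/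
theorem occupancy_measure_sum_sq_bounds
    {S A : Type*} [Fintype S] [Fintype A] [Nonempty S] [Nonempty A]
    (γ : ℝ) (hγ0 : 0 ≤ γ) (hγ1 : γ < 1)
    (T : S → A → S → ℝ)
    (hT0 : ∀ s a j, 0 ≤ T s a j)
    (hT1 : ∀ s a, ∑ j, T s a j = 1)
    (α : S → ℝ)
    (hα0 : ∀ j, 0 ≤ α j)
    (hα1 : ∑ j, α j = 1)
    (r : S → A → ℝ)
    (x : S → A → ℝ)
    (hx0 : ∀ s a, 0 ≤ x s a)
    (hflow : ∀ j, (∑ a, x j a) - γ * ∑ s, ∑ a, T s a j * x s a = α j) :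
    ((1 - γ)⁻¹) ^ 2 / ((Fintype.card S : ℝ) * (Fintype.card A : ℝ))
        ≤ ∑ s, ∑ a, (x s a) ^ 2 ∧
      ∑ s, ∑ a, (x s a) ^ 2 ≤ ((1 - γ)⁻¹) ^ 2 := by
  have hγ : (0:ℝ) < 1 - γ := by linarith
  -- total mass
  have hT : ∑ j, ∑ s, ∑ a, T s a j * x s a = ∑ s, ∑ a, x s a := by
    rw [Finset.sum_comm]
    refine Finset.sum_congr rfl fun s _ => ?_
    rw [Finset.sum_comm]
    refine Finset.sum_congr rfl fun a _ => ?_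
    rw [← Finset.sum_mul, hT1, one_mul]
  have hM : ∑ s, ∑ a, x s a = (1 - γ)⁻¹ := by
    have h : ∑ j, ((∑ a, x j a) - γ * ∑ s, ∑ a, T s a j * x s a) = 1 := by
      rw [Finset.sum_congr rfl fun j _ => hflow j, hα1]
    rw [Finset.sum_sub_distrib, ← Finset.mul_sum, hT] at h
    field_simp
    linarith
  set M : ℝ := (1 - γ)⁻¹ with hMdef
  have hMpos : 0 < M := inv_pos.mpr hγ
  -- rewrite as sum over product
  have hprod : ∑ s, ∑ a, (x s a) ^ 2 = ∑ p : S × A, (x p.1 p.2) ^ 2 := by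
    rw [Fintype.sum_prod_type]
  have hprod1 : ∑ p : S × A, x p.1 p.2 = M := by
    rw [Fintype.sum_prod_type]; exact hM
  constructor
  · -- lower bound via Cauchy-Schwarz
    have hcs := sq_sum_le_card_mul_sum_sq (s := (Finset.univ : Finset (S × A)))
      (f := fun p => x p.1 p.2)
    rw [hprod1, Finset.card_univ, Fintype.card_prod] at hcs
    have hcardpos : (0:ℝ) < (Fintype.card S : ℝ) * (Fintype.card A : ℝ) := by
      positivity
    rw [hprod, div_le_iff₀ hcardpos]
    push_cast at hcs ⊢
    nlinarith [hcs]
  · have h2 : ∑ p : S × A, (x p.1 p.2) ^ 2 ≤ (∑ p : S × A, x p.1 p.2) ^ 2 := by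
      apply Finset.sum_sq_le_sq_sum_of_nonneg
      intro p _; exact hx0 p.1 p.2
    rw [hprod, hprod1] at *
    calc ∑ p : S × A, (x p.1 p.2) ^ 2 ≤ M ^ 2 := by rw [← hprod1]; exact h2
      _ = ((1-γ)⁻¹)^2 := rfl
end

section
/- (Diversionary deception performance bound.) Let β > 0. Suppose x* ∈ X maximizes the revenue R over X, set R* = R(x*), and assume R* > 0. Suppose x_d ∈ X maximizes over X the diversionary objective x ↦ R(x) + β ∑_{s∈S} ∑_{a∈A} (x(s,a) − x*(s,a))². Then the revenue loss satisfies (R* − R(x_d))/R* ≤ (β/R*) ( ∑_{s∈S} ∑_{a∈A} x*(s,a)² + (1 − γ)^{-2} ). -/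
/-- `x` is in the feasible set `X` of the dual LP with the goal-reachability constraint:
it is nonnegative, satisfies the flow constraints, and its expected visitation of the
goal states is at least `vreach`. -/
def Feasible {S A : Type*} [Fintype S] [Fintype A]
    (γ : ℝ) (T : S → A → S → ℝ) (α : S → ℝ) (Sgoal : Finset S) (vreach : ℝ)
    (x : S → A → ℝ) : Prop :=
  (∀ s a, 0 ≤ x s a) ∧
  (∀ j, (∑ a, x j a) - γ * ∑ s, ∑ a, T s a j * x s a = α j) ∧
  vreach ≤ ∑ q ∈ Sgoal, ∑ s, ∑ a, T s a q * x s a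

lemma feasible_mass {S A : Type*} [Fintype S] [Fintype A]
    (γ : ℝ) (hγ1 : γ < 1)
    (T : S → A → S → ℝ) (hT1 : ∀ s a, ∑ j, T s a j = 1)
    (α : S → ℝ) (hα1 : ∑ j, α j = 1)
    (Sgoal : Finset S) (vreach : ℝ)
    (x : S → A → ℝ) (hx : Feasible γ T α Sgoal vreach x) :
    ∑ s, ∑ a, x s a = (1 - γ)⁻¹ := by
  have hflow := hx.2.1
  have hsum : ∑ j, ((∑ a, x j a) - γ * ∑ s, ∑ a, T s a j * x s a) = 1 := by
    rw [← hα1]; exact Finset.sum_congr rfl fun j _ => hflow j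
  have hT : ∑ j, ∑ s, ∑ a, T s a j * x s a = ∑ s, ∑ a, x s a := by
    rw [Finset.sum_comm]
    refine Finset.sum_congr rfl fun s _ => ?_
    rw [Finset.sum_comm]
    refine Finset.sum_congr rfl fun a _ => ?_
    rw [← Finset.sum_mul, hT1, one_mul]
  have h : (1 - γ) * (∑ s, ∑ a, x s a) = 1 := by
    have := hsum
    rw [Finset.sum_sub_distrib, ← Finset.mul_sum, hT] at this
    ring_nf
    ring_nf at this
    linarith
  have hne : (1 - γ) ≠ 0 := by linarith
  field_simp
  linarith

/-- **Theorem 1 (diversionary deception performance bound).** If `x*` maximizes the revenue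
over the feasible set `X`, with optimal revenue `R* > 0`, and `x_d` maximizes the
diversionary objective `R(x) + β ∑ (x - x*)²` over `X`, then the relative revenue loss of
`x_d` is at most `(β / R*) (∑ x*² + (1 - γ)⁻²)`. -/
theorem diversionary_deception_revenue_loss_bound
    {S A : Type*} [Fintype S] [Fintype A] [Nonempty S] [Nonempty A]
    (γ : ℝ) (hγ0 : 0 ≤ γ) (hγ1 : γ < 1)
    (T : S → A → S → ℝ)
    (hT0 : ∀ s a j, 0 ≤ T s a j)
    (hT1 : ∀ s a, ∑ j, T s a j = 1)
    (α : S → ℝ)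
    (hα0 : ∀ j, 0 ≤ α j)
    (hα1 : ∑ j, α j = 1)
    (r : S → A → ℝ)
    (Sgoal : Finset S) (vreach : ℝ)
    (β : ℝ) (hβ : 0 < β)
    (xstar : S → A → ℝ)
    (hxstar : Feasible γ T α Sgoal vreach xstar)
    (hxstar_opt : ∀ x : S → A → ℝ, Feasible γ T α Sgoal vreach x →
      ∑ s, ∑ a, r s a * x s a ≤ ∑ s, ∑ a, r s a * xstar s a)
    (Rstar : ℝ) (hRstar : Rstar = ∑ s, ∑ a, r s a * xstar s a)
    (hRstar_pos : 0 < Rstar)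
    (xd : S → A → ℝ)
    (hxd : Feasible γ T α Sgoal vreach xd)
    (hxd_opt : ∀ x : S → A → ℝ, Feasible γ T α Sgoal vreach x →
      (∑ s, ∑ a, r s a * x s a) + β * ∑ s, ∑ a, (x s a - xstar s a) ^ 2 ≤
        (∑ s, ∑ a, r s a * xd s a) + β * ∑ s, ∑ a, (xd s a - xstar s a) ^ 2) :
    (Rstar - ∑ s, ∑ a, r s a * xd s a) / Rstar ≤
      (β / Rstar) * ((∑ s, ∑ a, (xstar s a) ^ 2) + ((1 - γ)⁻¹) ^ 2) := by
  -- key inequality from optimality of xd at x = xstar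
  have hkey := hxd_opt xstar hxstar
  simp at hkey
  -- mass of xd
  have hmass := feasible_mass γ hγ1 T hT1 α hα1 Sgoal vreach xd hxd
  have hxd0 := hxd.1
  have hxs0 := hxstar.1
  set M : ℝ := ∑ s, ∑ a, xd s a with hM
  have hM0 : 0 ≤ M := Finset.sum_nonneg fun s _ => Finset.sum_nonneg fun a _ => hxd0 s a
  -- ∑ xd² ≤ M²
  have hsq : ∑ s, ∑ a, (xd s a) ^ 2 ≤ M ^ 2 := by
    have h1 : ∀ s ∈ Finset.univ (α := S), ∑ a, (xd s a) ^ 2 ≤ (∑ a, xd s a) * M := by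
      intro s _
      have : ∀ a ∈ Finset.univ (α := A), (xd s a) ^ 2 ≤ xd s a * M := by
        intro a _
        have hle : xd s a ≤ M := by
          calc xd s a ≤ ∑ a', xd s a' :=
                Finset.single_le_sum (fun a' _ => hxd0 s a') (Finset.mem_univ a)
            _ ≤ M := Finset.single_le_sum
                (f := fun s' => ∑ a', xd s' a')
                (fun s' _ => Finset.sum_nonneg fun a' _ => hxd0 s' a') (Finset.mem_univ s)
        nlinarith [hxd0 s a]
      calc ∑ a, (xd s a) ^ 2 ≤ ∑ a, xd s a * M := Finset.sum_le_sum this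
        _ = (∑ a, xd s a) * M := by rw [Finset.sum_mul]
    calc ∑ s, ∑ a, (xd s a) ^ 2 ≤ ∑ s, (∑ a, xd s a) * M := Finset.sum_le_sum h1
      _ = M * M := by rw [← Finset.sum_mul]
      _ = M ^ 2 := (sq M).symm
  -- pointwise (xd - x*)² ≤ xd² + x*²
  have hpt : ∑ s, ∑ a, (xd s a - xstar s a) ^ 2 ≤
      (∑ s, ∑ a, (xd s a) ^ 2) + ∑ s, ∑ a, (xstar s a) ^ 2 := by
    rw [← Finset.sum_add_distrib]
    refine Finset.sum_le_sum fun s _ => ?_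
    rw [← Finset.sum_add_distrib]
    refine Finset.sum_le_sum fun a _ => ?_
    nlinarith [hxd0 s a, hxs0 s a]
  have hbound : ∑ s, ∑ a, (xd s a - xstar s a) ^ 2 ≤
      (∑ s, ∑ a, (xstar s a) ^ 2) + ((1 - γ)⁻¹) ^ 2 := by
    have : M ^ 2 = ((1 - γ)⁻¹) ^ 2 := by rw [hmass]
    linarith
  have hmain : Rstar - (∑ s, ∑ a, r s a * xd s a) ≤
      β * ((∑ s, ∑ a, (xstar s a) ^ 2) + ((1 - γ)⁻¹) ^ 2) := by
    have := mul_le_mul_of_nonneg_left hbound hβ.le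
    rw [hRstar]; linarith
  rw [div_le_iff₀ hRstar_pos]
  calc Rstar - (∑ s, ∑ a, r s a * xd s a)
      ≤ β * ((∑ s, ∑ a, (xstar s a) ^ 2) + ((1 - γ)⁻¹) ^ 2) := hmain
    _ = β / Rstar * ((∑ s, ∑ a, (xstar s a) ^ 2) + ((1 - γ)⁻¹) ^ 2) * Rstar := by
        field_simp
end

section
/- (Targeted deception performance bound.) Let β > 0 and let x_tar : S × A → ℝ satisfy x_tar(s,a) ≥ 0 for all (s,a). Suppose x* ∈ X maximizes the revenue R over X, set R* = R(x*), and assume R* > 0. Suppose x_d ∈ X maximizes over X the targeted objective x ↦ R(x) − β ∑_{s∈S} ∑_{a∈A} (x(s,a) − x_tar(s,a))². Then the revenue loss satisfies (R* − R(x_d))/R* ≤ (β/R*) [ ∑_{s∈S} ∑_{a∈A} ( x*(s,a)² − 2 x_tar(s,a) x*(s,a) ) − (1 − γ)^{-2}/(|S||A|) + 2 (1 − γ)^{-1} max_{(s,a) ∈ S × A} x_tar(s,a) ]. -/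
/-- **Theorem 2 (targeted deception performance bound).** If `x*` maximizes the revenue
over the feasible set `X`, with optimal revenue `R* > 0`, and `x_d` maximizes the targeted
objective `R(x) - β ∑ (x - x_tar)²` over `X`, then the relative revenue loss of `x_d` is at
most `(β / R*) [∑ (x*² - 2 x_tar x*) - (1 - γ)⁻² / (|S||A|) + 2 (1 - γ)⁻¹ max x_tar]`. -/
theorem targeted_deception_revenue_loss_bound
    {S A : Type*} [Fintype S] [Fintype A] [Nonempty S] [Nonempty A]
    (γ : ℝ) (hγ0 : 0 ≤ γ) (hγ1 : γ < 1)
    (T : S → A → S → ℝ)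
    (hT0 : ∀ s a j, 0 ≤ T s a j)
    (hT1 : ∀ s a, ∑ j, T s a j = 1)
    (α : S → ℝ)
    (hα0 : ∀ j, 0 ≤ α j)
    (hα1 : ∑ j, α j = 1)
    (r : S → A → ℝ)
    (Sgoal : Finset S) (vreach : ℝ)
    (β : ℝ) (hβ : 0 < β)
    (xtar : S → A → ℝ) (hxtar0 : ∀ s a, 0 ≤ xtar s a)
    (xstar : S → A → ℝ)
    (hxstar : Feasible γ T α Sgoal vreach xstar)
    (hxstar_opt : ∀ x : S → A → ℝ, Feasible γ T α Sgoal vreach x →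
      ∑ s, ∑ a, r s a * x s a ≤ ∑ s, ∑ a, r s a * xstar s a)
    (Rstar : ℝ) (hRstar : Rstar = ∑ s, ∑ a, r s a * xstar s a)
    (hRstar_pos : 0 < Rstar)
    (xd : S → A → ℝ)
    (hxd : Feasible γ T α Sgoal vreach xd)
    (hxd_opt : ∀ x : S → A → ℝ, Feasible γ T α Sgoal vreach x →
      (∑ s, ∑ a, r s a * x s a) - β * ∑ s, ∑ a, (x s a - xtar s a) ^ 2 ≤
        (∑ s, ∑ a, r s a * xd s a) - β * ∑ s, ∑ a, (xd s a - xtar s a) ^ 2) :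
    (Rstar - ∑ s, ∑ a, r s a * xd s a) / Rstar ≤
      (β / Rstar) *
        ((∑ s, ∑ a, ((xstar s a) ^ 2 - 2 * xtar s a * xstar s a))
          - ((1 - γ)⁻¹) ^ 2 / ((Fintype.card S : ℝ) * (Fintype.card A : ℝ))
          + 2 * (1 - γ)⁻¹ *
              (Finset.univ.sup' Finset.univ_nonempty (fun p : S × A => xtar p.1 p.2))) := by

  have hden : (0:ℝ) < 1 - γ := by linarith
  obtain ⟨hxd0, hxdflow, _⟩ := hxd
  -- total mass of xd
  have hmass : ∑ s, ∑ a, xd s a = (1 - γ)⁻¹ := by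
    have hsum : ∑ j, ((∑ a, xd j a) - γ * ∑ s, ∑ a, T s a j * xd s a) = 1 := by
      rw [Finset.sum_congr rfl fun j _ => hxdflow j, hα1]
    have hswap : ∑ j, ∑ s, ∑ a, T s a j * xd s a = ∑ s, ∑ a, xd s a := by
      rw [Finset.sum_comm]
      refine Finset.sum_congr rfl fun s _ => ?_
      rw [Finset.sum_comm]
      refine Finset.sum_congr rfl fun a _ => ?_
      rw [← Finset.sum_mul, hT1, one_mul]
    rw [Finset.sum_sub_distrib, ← Finset.mul_sum, hswap] at hsum
    field_simp
    linarith
  set M := Finset.univ.sup' Finset.univ_nonempty (fun p : S × A => xtar p.1 p.2) with hM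
  set N := (Fintype.card S : ℝ) * (Fintype.card A : ℝ) with hN
  have hNpos : (0:ℝ) < N := by
    have h1 : 0 < Fintype.card S := Fintype.card_pos
    have h2 : 0 < Fintype.card A := Fintype.card_pos
    positivity
  -- Cauchy-Schwarz: ((1-γ)⁻¹)² / N ≤ ∑ xd²
  have hCS : ((1 - γ)⁻¹) ^ 2 / N ≤ ∑ s, ∑ a, (xd s a) ^ 2 := by
    have h := sq_sum_le_card_mul_sum_sq (s := (Finset.univ : Finset (S × A)))
      (f := fun p : S × A => xd p.1 p.2)
    rw [Finset.card_univ, Fintype.card_prod] at h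
    rw [div_le_iff₀ hNpos]
    calc ((1 - γ)⁻¹) ^ 2 = (∑ p : S × A, xd p.1 p.2) ^ 2 := by
          rw [Fintype.sum_prod_type, hmass]
      _ ≤ (Fintype.card S * Fintype.card A : ℕ) * ∑ p : S × A, (xd p.1 p.2) ^ 2 := h
      _ = (∑ s, ∑ a, (xd s a) ^ 2) * N := by
          rw [Fintype.sum_prod_type]
          push_cast
          ring
  -- cross term bound
  have hcross : ∑ s, ∑ a, xtar s a * xd s a ≤ M * (1 - γ)⁻¹ := by
    rw [← hmass, Finset.mul_sum]
    refine Finset.sum_le_sum fun s _ => ?_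
    rw [Finset.mul_sum]
    refine Finset.sum_le_sum fun a _ => ?_
    exact mul_le_mul_of_nonneg_right
      (Finset.le_sup' (fun p : S × A => xtar p.1 p.2) (Finset.mem_univ (s, a))) (hxd0 s a)
  -- optimality comparison
  have hopt := hxd_opt xstar hxstar
  have hkey : Rstar - (∑ s, ∑ a, r s a * xd s a) ≤
      β * ((∑ s, ∑ a, ((xstar s a) ^ 2 - 2 * xtar s a * xstar s a))
        - ((1 - γ)⁻¹) ^ 2 / N + 2 * (1 - γ)⁻¹ * M) := by
    have hexp : ∑ s, ∑ a, (xstar s a - xtar s a) ^ 2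
        - ∑ s, ∑ a, (xd s a - xtar s a) ^ 2
        = (∑ s, ∑ a, ((xstar s a) ^ 2 - 2 * xtar s a * xstar s a))
          - (∑ s, ∑ a, (xd s a) ^ 2) + 2 * ∑ s, ∑ a, xtar s a * xd s a := by
      simp only [Finset.mul_sum, ← Finset.sum_sub_distrib, ← Finset.sum_add_distrib]
      refine Finset.sum_congr rfl fun s _ => Finset.sum_congr rfl fun a _ => ?_
      ring
    have h1 : Rstar - (∑ s, ∑ a, r s a * xd s a) ≤
        β * (∑ s, ∑ a, (xstar s a - xtar s a) ^ 2 - ∑ s, ∑ a, (xd s a - xtar s a) ^ 2) := by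
      rw [hRstar]; nlinarith [hopt]
    refine h1.trans ?_
    rw [hexp]
    have := hβ.le
    nlinarith [hCS, hcross]
  have hfinal : (β / Rstar) *
      ((∑ s, ∑ a, ((xstar s a) ^ 2 - 2 * xtar s a * xstar s a))
        - ((1 - γ)⁻¹) ^ 2 / N + 2 * (1 - γ)⁻¹ * M)
      = (β * ((∑ s, ∑ a, ((xstar s a) ^ 2 - 2 * xtar s a * xstar s a))
        - ((1 - γ)⁻¹) ^ 2 / N + 2 * (1 - γ)⁻¹ * M)) / Rstar := by ring
  rw [hfinal]
  exact div_le_div_of_nonneg_right hkey hRstar_pos.le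
end

section
/- (Equivocal deception performance bound.) Let β > 0 and let S_goal ⊆ S and S_decoy ⊆ S be subsets of the state set. Suppose x* ∈ X maximizes the revenue R over X, set R* = R(x*), and assume R* > 0. Suppose x_d ∈ X maximizes over X the equivocal objective x ↦ R(x) − β ( ∑_{s∈S_goal} ∑_{a∈A} x(s,a) − ∑_{s∈S_decoy} ∑_{a∈A} x(s,a) )². Then the revenue loss satisfies (R* − R(x_d))/R* ≤ (β/R*) ( ∑_{s∈S_goal} ∑_{a∈A} x*(s,a) − ∑_{s∈S_decoy} ∑_{a∈A} x*(s,a) )². -/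
/-- **Theorem 3 (equivocal deception performance bound).** If `x*` maximizes the revenue
over the feasible set `X`, with optimal revenue `R* > 0`, and `x_d` maximizes the equivocal
objective `R(x) - β (∑_{goal} x - ∑_{decoy} x)²` over `X`, then the relative revenue loss
of `x_d` is at most `(β / R*) (∑_{goal} x* - ∑_{decoy} x*)²`. -/
theorem equivocal_deception_revenue_loss_bound
    {S A : Type*} [Fintype S] [Fintype A] [Nonempty S] [Nonempty A]
    (γ : ℝ) (hγ0 : 0 ≤ γ) (hγ1 : γ < 1)
    (T : S → A → S → ℝ)
    (hT0 : ∀ s a j, 0 ≤ T s a j)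
    (hT1 : ∀ s a, ∑ j, T s a j = 1)
    (α : S → ℝ)
    (hα0 : ∀ j, 0 ≤ α j)
    (hα1 : ∑ j, α j = 1)
    (r : S → A → ℝ)
    (Sgoal Sdecoy : Finset S) (vreach : ℝ)
    (β : ℝ) (hβ : 0 < β)
    (xstar : S → A → ℝ)
    (hxstar : Feasible γ T α Sgoal vreach xstar)
    (hxstar_opt : ∀ x : S → A → ℝ, Feasible γ T α Sgoal vreach x →
      ∑ s, ∑ a, r s a * x s a ≤ ∑ s, ∑ a, r s a * xstar s a)
    (Rstar : ℝ) (hRstar : Rstar = ∑ s, ∑ a, r s a * xstar s a)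
    (hRstar_pos : 0 < Rstar)
    (xd : S → A → ℝ)
    (hxd : Feasible γ T α Sgoal vreach xd)
    (hxd_opt : ∀ x : S → A → ℝ, Feasible γ T α Sgoal vreach x →
      (∑ s, ∑ a, r s a * x s a)
          - β * ((∑ s ∈ Sgoal, ∑ a, x s a) - ∑ s ∈ Sdecoy, ∑ a, x s a) ^ 2 ≤
        (∑ s, ∑ a, r s a * xd s a)
          - β * ((∑ s ∈ Sgoal, ∑ a, xd s a) - ∑ s ∈ Sdecoy, ∑ a, xd s a) ^ 2) :
    (Rstar - ∑ s, ∑ a, r s a * xd s a) / Rstar ≤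
      (β / Rstar) *
        ((∑ s ∈ Sgoal, ∑ a, xstar s a) - ∑ s ∈ Sdecoy, ∑ a, xstar s a) ^ 2 := by
  have h := hxd_opt xstar hxstar
  rw [div_le_iff₀ hRstar_pos, div_mul_eq_mul_div, div_mul_eq_mul_div, mul_div_assoc,
    div_self (ne_of_gt hRstar_pos), mul_one]
  nlinarith [sq_nonneg ((∑ s ∈ Sgoal, ∑ a, xd s a) - ∑ s ∈ Sdecoy, ∑ a, xd s a)]
end
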